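/- In the six-symbol bosonic Weyl system realizing the fields β(z), β*(z), ε_1(z), ε_1*(z), ε_2(z), ε_2*(z), with x_0⁺(m) := ½(:β*e*:)(m) and x_1⁺(m) := √−1·(:ef*:)(m), the cubic Serre relation holds in mode form: for all k_1, k_2, k_3, l ∈ ℤ, [x_1⁺(k_1), [x_1⁺(k_2), [x_1⁺(k_3), x_0⁺(l)]]] = 0, where [A,B] = AB − BA. (This is the coefficientwise form of the relation [x_1^+(z_1), [x_1^+(z_2), [x_1^+(z_3), x_0^+(w)]]] = 0 verified in the proof of Theorem 3.5.) -/
import Mathlib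


noncomputable section

/-- A *bosonic Weyl system* over a set `S` of symbols with pairing `pair : S → S → ℂ`
on a complex vector space `W`: a family of operators `op u k` (`u ∈ S`, `k ∈ ℤ`)
such that `[op u k, op v l] = ⟨u,v⟩ δ_{k+l,0} id`. -/
def IsBosonicWeylSystem {S W : Type*} [AddCommGroup W] [Module ℂ W]
    (pair : S → S → ℂ) (op : S → ℤ → Module.End ℂ W) : Prop :=
  ∀ u v : S, ∀ k l : ℤ,
    op u k * op v l - op v l * op u k =
      if k + l = 0 then pair u v • (1 : Module.End ℂ W) else 0

/-- A family of operators is *locally annihilating* if for every vector `w` and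
every symbol `u`, `op u k w = 0` for all sufficiently large `k`. -/
def LocallyAnnihilating {S W : Type*} [AddCommGroup W] [Module ℂ W]
    (op : S → ℤ → Module.End ℂ W) : Prop :=
  ∀ (w : W) (u : S), ∃ K : ℤ, ∀ k : ℤ, K ≤ k → op u k w = 0

/-- The normally ordered quadratic mode
`(:uv:)(m) = Σ_{j<0} u(j)v(m-j) + Σ_{j≥0} v(m-j)u(j)` applied to a vector `w`;
on a locally annihilating system all but finitely many summands vanish, so the
`finsum` computes the intended (finite) sum. -/
def noMode {S W : Type*} [AddCommGroup W] [Module ℂ W]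
    (op : S → ℤ → Module.End ℂ W) (u v : S) (m : ℤ) (w : W) : W :=
  ∑ᶠ j : ℤ, if j < 0 then op u j (op v (m - j) w) else op v (m - j) (op u j w)

end

/-- The six symbols `β, β*, ε₁, ε₁*, ε₂, ε₂*`: the symbol `(i, false)` is the plain
symbol (`0 = β`, `1 = ε₁ = e`, `2 = ε₂ = f`) and `(i, true)` the starred one. -/
abbrev WSym6 : Type := Fin 3 × Bool

/-- The Gram values `g(β,β) = g(β,e) = g(e,β) = g(e,e) = g(f,f) = 1`, `g(β,f) = g(e,f) = 0`. -/
noncomputable def gram6 : Fin 3 → Fin 3 → ℂ := !![1, 1, 0; 1, 1, 0; 0, 0, 1]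

/-- The pairing `⟨u, v*⟩ = -g(u,v)`, `⟨u*, v⟩ = g(u,v)`, `⟨u,v⟩ = ⟨u*,v*⟩ = 0`. -/
noncomputable def pair6 : WSym6 → WSym6 → ℂ
  | (i, false), (j, true) => -gram6 i j
  | (i, true), (j, false) => gram6 i j
  | _, _ => 0

section
variable {W : Type*} [AddCommGroup W] [Module ℂ W] (op : WSym6 → ℤ → Module.End ℂ W)

/-- `x₀⁺(m) = ½ (:β*e*:)(m)` (applied to a vector). -/
noncomputable def xZeroPlus (m : ℤ) (w : W) : W :=
  (1 / 2 : ℂ) • noMode op (0, true) (1, true) m w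

/-- `x₀⁻(m) = ½ (:βe:)(m)` (applied to a vector). -/
noncomputable def xZeroMinus (m : ℤ) (w : W) : W :=
  (1 / 2 : ℂ) • noMode op (0, false) (1, false) m w

/-- `x₁⁺(m) = √-1 (:ef*:)(m)` (applied to a vector). -/
noncomputable def xOnePlus (m : ℤ) (w : W) : W :=
  Complex.I • noMode op (1, false) (2, true) m w

/-- `α₀(m) = -½[(:ee*:)(m) + (:eβ*:)(m) + (:βe*:)(m) + (:ββ*:)(m)]` (applied to a vector). -/
noncomputable def alZero (m : ℤ) (w : W) : W :=
  (-(1 / 2) : ℂ) • (noMode op (1, false) (1, true) m w + noMode op (1, false) (0, true) m w +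
    noMode op (0, false) (1, true) m w + noMode op (0, false) (0, true) m w)

end

/-- The commutator `[A, B] = AB - BA` of two (pointwise-defined) operators. -/
def brkt {W : Type*} [AddCommGroup W] (A B : W → W) : W → W := fun w => A (B w) - B (A w)

section Proof
variable {W : Type*} [AddCommGroup W] [Module ℂ W] (op : WSym6 → ℤ → Module.End ℂ W)

lemma apply_comm (hW : IsBosonicWeylSystem pair6 op) {u v : WSym6} (h : pair6 u v = 0)
    (k l : ℤ) (x : W) : op u k (op v l x) = op v l (op u k x) := by
  have h1 := hW u v k l
  rw [h] at h1
  simp only [zero_smul, ite_self, sub_eq_zero] at h1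
  exact congrArg (fun T : Module.End ℂ W => T x) h1

lemma e_move (hW : IsBosonicWeylSystem pair6 op) (X : WSym6) (j i : ℤ) (x : W) :
    op (1,false) j (op X i x)
      = op X i (op (1,false) j x) + (if j + i = 0 then pair6 (1,false) X else 0) • x := by
  have h1 := congrArg (fun T : Module.End ℂ W => T x) (hW (1,false) X j i)
  simp only [LinearMap.sub_apply, Module.End.mul_apply,
    apply_ite (fun T : Module.End ℂ W => T x), LinearMap.smul_apply, Module.End.one_apply,
    LinearMap.zero_apply] at h1
  have h2 : (if j + i = 0 then pair6 (1,false) X • x else 0)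
      = (if j + i = 0 then pair6 (1,false) X else 0) • x := by split <;> simp
  rw [h2] at h1
  linear_combination (norm := abel) h1

lemma vanish (hW : IsBosonicWeylSystem pair6 op) (hA : LocallyAnnihilating op)
    {u v : WSym6} (huv : pair6 u v = 0) (m : ℤ) (x : W) :
    ∃ a b : ℤ, ∀ j : ℤ, op u j (op v (m - j) x) ≠ 0 → j ∈ Finset.Ioo a b := by
  obtain ⟨Ku, hKu⟩ := hA x u
  obtain ⟨Kv, hKv⟩ := hA x v
  refine ⟨m - Kv, Ku, fun j hj => Finset.mem_Ioo.2 ⟨?_, ?_⟩⟩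
  · by_contra h
    push_neg at h
    exact hj (by rw [hKv (m - j) (by omega)]; simp)
  · by_contra h
    push_neg at h
    exact hj (by rw [apply_comm op hW huv, hKu j h]; simp)

lemma noMode_rep (hW : IsBosonicWeylSystem pair6 op) {u v : WSym6} (huv : pair6 u v = 0)
    (m : ℤ) (x : W) (s : Finset ℤ)
    (hs : ∀ j ∉ s, op u j (op v (m - j) x) = 0) :
    noMode op u v m x = ∑ j ∈ s, op u j (op v (m - j) x) := by
  unfold noMode
  have h1 : ∀ j : ℤ,
      (if j < 0 then op u j (op v (m - j) x) else op v (m - j) (op u j x))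
        = op u j (op v (m - j) x) := by
    intro j
    split
    · rfl
    · exact (apply_comm op hW huv j (m - j) x).symm
  rw [finsum_congr h1]
  exact finsum_eq_finset_sum_of_support_subset _ (Function.support_subset_iff'.2 hs)

lemma pair_ef : pair6 (1,false) (2,true) = 0 := by simp [pair6, gram6]

lemma ptwise (hW : IsBosonicWeylSystem pair6 op) {X Y : WSym6}
    (hfX : pair6 (2,true) X = 0) (hfY : pair6 (2,true) Y = 0)
    (k m j i : ℤ) (w : W) :
    op (1,false) j (op (2,true) (k-j) (op X i (op Y (m-i) w)))
      - op X i (op Y (m-i) (op (1,false) j (op (2,true) (k-j) w)))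
    = (if j + i = 0 then pair6 (1,false) X else 0) • op (2,true) (k-j) (op Y (m-i) w)
      + (if j + (m-i) = 0 then pair6 (1,false) Y else 0) • op (2,true) (k-j) (op X i w) := by
  rw [apply_comm op hW pair_ef j (k-j) (op X i (op Y (m-i) w)),
    e_move op hW X j i, e_move op hW Y j (m-i)]
  simp only [map_add, map_smul]
  rw [apply_comm op hW hfX (k-j) i, apply_comm op hW hfY (k-j) (m-i),
    ← apply_comm op hW pair_ef j (k-j) w]
  abel

lemma xOnePlus_smul (hW : IsBosonicWeylSystem pair6 op) (hA : LocallyAnnihilating op)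
    (k : ℤ) (c : ℂ) (x : W) : xOnePlus op k (c • x) = c • xOnePlus op k x := by
  obtain ⟨a₁, b₁, h₁⟩ := vanish op hW hA pair_ef k x
  obtain ⟨a₂, b₂, h₂⟩ := vanish op hW hA pair_ef k (c • x)
  set s : Finset ℤ := Finset.Ioo a₁ b₁ ∪ Finset.Ioo a₂ b₂ with hsdef
  unfold xOnePlus
  rw [noMode_rep op hW pair_ef k x s (fun j hj => by
      by_contra hne
      exact hj (by simp only [hsdef, Finset.mem_union]; exact Or.inl (h₁ j hne))),
    noMode_rep op hW pair_ef k (c • x) s (fun j hj => by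
      by_contra hne
      exact hj (by simp only [hsdef, Finset.mem_union]; exact Or.inr (h₂ j hne)))]
  simp only [map_smul, Finset.smul_sum]
  exact Finset.sum_congr rfl fun j _ => smul_comm _ _ _

lemma xOnePlus_add (hW : IsBosonicWeylSystem pair6 op) (hA : LocallyAnnihilating op)
    (k : ℤ) (x y : W) : xOnePlus op k (x + y) = xOnePlus op k x + xOnePlus op k y := by
  obtain ⟨a₁, b₁, h₁⟩ := vanish op hW hA pair_ef k x
  obtain ⟨a₂, b₂, h₂⟩ := vanish op hW hA pair_ef k y
  obtain ⟨a₃, b₃, h₃⟩ := vanish op hW hA pair_ef k (x + y)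
  set s : Finset ℤ := Finset.Ioo a₁ b₁ ∪ Finset.Ioo a₂ b₂ ∪ Finset.Ioo a₃ b₃ with hsdef
  unfold xOnePlus
  rw [noMode_rep op hW pair_ef k x s (fun j hj => by
      by_contra hne
      exact hj (by simp only [hsdef, Finset.mem_union]; exact Or.inl (Or.inl (h₁ j hne)))),
    noMode_rep op hW pair_ef k y s (fun j hj => by
      by_contra hne
      exact hj (by simp only [hsdef, Finset.mem_union]; exact Or.inl (Or.inr (h₂ j hne)))),
    noMode_rep op hW pair_ef k (x + y) s (fun j hj => by
      by_contra hne
      exact hj (by simp only [hsdef, Finset.mem_union]; exact Or.inr (h₃ j hne)))]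
  simp only [map_add, Finset.sum_add_distrib, smul_add]

lemma master (hW : IsBosonicWeylSystem pair6 op) (hA : LocallyAnnihilating op)
    {X Y : WSym6} (hfX : pair6 (2,true) X = 0) (hfY : pair6 (2,true) Y = 0)
    (hXY : pair6 X Y = 0) (k m : ℤ) (w : W) :
    brkt (xOnePlus op k) (fun x => noMode op X Y m x) w
      = Complex.I • (pair6 (1,false) X • noMode op (2,true) Y (k+m) w
          + pair6 (1,false) Y • noMode op (2,true) X (k+m) w) := by
  obtain ⟨KY, hKY⟩ := hA w Y
  obtain ⟨KX, hKX⟩ := hA w X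
  obtain ⟨Kf, hKf⟩ := hA w (2,true)
  obtain ⟨a₁, b₁, h₁⟩ := vanish op hW hA pair_ef k (noMode op X Y m w)
  obtain ⟨a₂, b₂, h₂⟩ := vanish op hW hA pair_ef k w
  set s₁ : Finset ℤ := Finset.Ioo a₁ b₁ ∪ Finset.Ioo a₂ b₂ ∪ Finset.Ioo (k - Kf) (KY - m)
      ∪ Finset.Ioo (k - Kf) (KX - m) with hs₁def
  obtain ⟨a₃, b₃, h₃⟩ := vanish op hW hA hXY m w
  obtain ⟨a₄, b₄, h₄⟩ := vanish op hW hA hXY m (xOnePlus op k w)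
  set s₂ : Finset ℤ := Finset.Ioo a₃ b₃ ∪ Finset.Ioo a₄ b₄ ∪ s₁.image (fun j => -j)
      ∪ s₁.image (fun j => m + j) with hs₂def
  have hmem1 : ∀ j ∈ s₁, (-j) ∈ s₂ := fun j hj => by
    simp only [hs₂def, Finset.mem_union]
    exact Or.inl (Or.inr (Finset.mem_image_of_mem _ hj))
  have hmem2 : ∀ j ∈ s₁, (m + j) ∈ s₂ := fun j hj => by
    simp only [hs₂def, Finset.mem_union]
    exact Or.inr (Finset.mem_image_of_mem _ hj)
  have E1 : noMode op X Y m w = ∑ i ∈ s₂, op X i (op Y (m - i) w) :=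
    noMode_rep op hW hXY m w s₂ (fun i hi => by
      by_contra hne
      exact hi (by simp only [hs₂def, Finset.mem_union]; exact Or.inl (Or.inl (Or.inl (h₃ i hne)))))
  have E2 : noMode op X Y m (xOnePlus op k w)
      = ∑ i ∈ s₂, op X i (op Y (m - i) (xOnePlus op k w)) :=
    noMode_rep op hW hXY m _ s₂ (fun i hi => by
      by_contra hne
      exact hi (by simp only [hs₂def, Finset.mem_union]; exact Or.inl (Or.inl (Or.inr (h₄ i hne)))))
  have E3 : xOnePlus op k (noMode op X Y m w)
      = Complex.I • ∑ j ∈ s₁, op (1,false) j (op (2,true) (k - j) (noMode op X Y m w)) := by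
    unfold xOnePlus
    rw [noMode_rep op hW pair_ef k _ s₁ (fun j hj => by
      by_contra hne
      exact hj (by simp only [hs₁def, Finset.mem_union]; exact Or.inl (Or.inl (Or.inl (h₁ j hne)))))]
  have E4 : xOnePlus op k w
      = Complex.I • ∑ j ∈ s₁, op (1,false) j (op (2,true) (k - j) w) := by
    unfold xOnePlus
    rw [noMode_rep op hW pair_ef k _ s₁ (fun j hj => by
      by_contra hne
      exact hj (by simp only [hs₁def, Finset.mem_union]; exact Or.inl (Or.inl (Or.inr (h₂ j hne)))))]
  have E5 : noMode op (2,true) Y (k+m) w = ∑ j ∈ s₁, op (2,true) (k - j) (op Y (m + j) w) := by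
    rw [noMode_rep op hW hfY (k+m) w (s₁.image (fun j => k - j)) (fun n hn => by
      by_contra hne
      have hY : op Y (k + m - n) w ≠ 0 := fun h => hne (by rw [h, map_zero])
      have hf : op (2,true) n w ≠ 0 := fun h =>
        hne (by rw [apply_comm op hW hfY n (k+m-n) w, h, map_zero])
      have hn1 : k + m - n < KY := by by_contra hc; push_neg at hc; exact hY (hKY _ hc)
      have hn2 : n < Kf := by by_contra hc; push_neg at hc; exact hf (hKf _ hc)
      refine hn (Finset.mem_image.2 ⟨k - n, ?_, by ring⟩)
      simp only [hs₁def, Finset.mem_union, Finset.mem_Ioo]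
      exact Or.inl (Or.inr ⟨by omega, by omega⟩))]
    rw [Finset.sum_image (fun a _ b _ h => by omega)]
    refine Finset.sum_congr rfl fun j _ => ?_
    have h : k + m - (k - j) = m + j := by ring
    rw [h]
  have E6 : noMode op (2,true) X (k+m) w = ∑ j ∈ s₁, op (2,true) (k - j) (op X (m + j) w) := by
    rw [noMode_rep op hW hfX (k+m) w (s₁.image (fun j => k - j)) (fun n hn => by
      by_contra hne
      have hX : op X (k + m - n) w ≠ 0 := fun h => hne (by rw [h, map_zero])
      have hf : op (2,true) n w ≠ 0 := fun h =>
        hne (by rw [apply_comm op hW hfX n (k+m-n) w, h, map_zero])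
      have hn1 : k + m - n < KX := by by_contra hc; push_neg at hc; exact hX (hKX _ hc)
      have hn2 : n < Kf := by by_contra hc; push_neg at hc; exact hf (hKf _ hc)
      refine hn (Finset.mem_image.2 ⟨k - n, ?_, by ring⟩)
      simp only [hs₁def, Finset.mem_union, Finset.mem_Ioo]
      exact Or.inr ⟨by omega, by omega⟩)]
    rw [Finset.sum_image (fun a _ b _ h => by omega)]
    refine Finset.sum_congr rfl fun j _ => ?_
    have h : k + m - (k - j) = m + j := by ring
    rw [h]
  show xOnePlus op k (noMode op X Y m w) - noMode op X Y m (xOnePlus op k w) = _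
  rw [E3, E1, E2, E4]
  simp only [map_sum, map_smul]
  rw [← Finset.smul_sum]
  have hcomm : (∑ i ∈ s₂, ∑ j ∈ s₁,
        op X i (op Y (m - i) (op (1,false) j (op (2,true) (k - j) w))))
      = ∑ j ∈ s₁, ∑ i ∈ s₂,
        op X i (op Y (m - i) (op (1,false) j (op (2,true) (k - j) w))) := Finset.sum_comm
  rw [hcomm, ← smul_sub, ← Finset.sum_sub_distrib]
  have key : ∀ j ∈ s₁,
      ((∑ i ∈ s₂, op (1,false) j (op (2,true) (k - j) (op X i (op Y (m - i) w))))
        - ∑ i ∈ s₂, op X i (op Y (m - i) (op (1,false) j (op (2,true) (k - j) w))))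
      = pair6 (1,false) X • op (2,true) (k - j) (op Y (m + j) w)
        + pair6 (1,false) Y • op (2,true) (k - j) (op X (m + j) w) := by
    intro j hj
    rw [← Finset.sum_sub_distrib,
      Finset.sum_congr rfl (fun i _ => ptwise op hW hfX hfY k m j i w),
      Finset.sum_add_distrib]
    congr 1
    · rw [Finset.sum_eq_single_of_mem (-j) (hmem1 j hj)
        (fun b _ hb => by rw [if_neg (by omega), zero_smul])]
      rw [if_pos (by omega)]
      have h : m - (-j) = m + j := by ring
      rw [h]
    · rw [Finset.sum_eq_single_of_mem (m + j) (hmem2 j hj)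
        (fun b _ hb => by rw [if_neg (by omega), zero_smul])]
      rw [if_pos (by omega)]
  rw [Finset.sum_congr rfl key, Finset.sum_add_distrib, ← Finset.smul_sum, ← Finset.smul_sum,
    ← E5, ← E6]

end Proof

/-- in the six-symbol bosonic Weyl system, the cubic Serre relation
`[x₁⁺(k₁), [x₁⁺(k₂), [x₁⁺(k₃), x₀⁺(l)]]] = 0` holds in mode form. -/
theorem serre_cubic {W : Type*} [AddCommGroup W] [Module ℂ W]
    (op : WSym6 → ℤ → Module.End ℂ W)
    (hW : IsBosonicWeylSystem pair6 op) (hA : LocallyAnnihilating op)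
    (k₁ k₂ k₃ l : ℤ) (w : W) :
    brkt (xOnePlus op k₁) (brkt (xOnePlus op k₂) (brkt (xOnePlus op k₃) (xZeroPlus op l))) w
      = 0 := by
  have pFβ : pair6 (2,true) (0,true) = 0 := by simp [pair6]
  have pFe : pair6 (2,true) (1,true) = 0 := by simp [pair6]
  have pFF : pair6 (2,true) (2,true) = 0 := by simp [pair6]
  have pβe : pair6 (0,true) (1,true) = 0 := by simp [pair6]
  have peβ : pair6 (1,false) (0,true) = -1 := by simp [pair6, gram6]
  have pee : pair6 (1,false) (1,true) = -1 := by simp [pair6, gram6]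
  -- Step 1 : [x₁⁺(k₃), x₀⁺(l)]
  have h1 : brkt (xOnePlus op k₃) (xZeroPlus op l)
      = fun x => (-(Complex.I)/2) • (noMode op (2,true) (1,true) (k₃+l) x
          + noMode op (2,true) (0,true) (k₃+l) x) := by
    funext x
    show xOnePlus op k₃ ((1/2 : ℂ) • noMode op (0,true) (1,true) l x)
        - (1/2 : ℂ) • noMode op (0,true) (1,true) l (xOnePlus op k₃ x) = _
    rw [xOnePlus_smul op hW hA, ← smul_sub]
    have hm : xOnePlus op k₃ (noMode op (0,true) (1,true) l x)
        - noMode op (0,true) (1,true) l (xOnePlus op k₃ x)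
        = Complex.I • (pair6 (1,false) (0,true) • noMode op (2,true) (1,true) (k₃+l) x
            + pair6 (1,false) (1,true) • noMode op (2,true) (0,true) (k₃+l) x) :=
      master op hW hA pFβ pFe pβe k₃ l x
    rw [hm, peβ, pee]
    module
  -- Step 2 : [x₁⁺(k₂), [x₁⁺(k₃), x₀⁺(l)]]
  have h2 : brkt (xOnePlus op k₂) (brkt (xOnePlus op k₃) (xZeroPlus op l))
      = fun x => ((-(Complex.I)/2) * (Complex.I * (-1) + Complex.I * (-1))) •
          noMode op (2,true) (2,true) (k₂+(k₃+l)) x := by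
    rw [h1]
    funext x
    show xOnePlus op k₂ ((-(Complex.I)/2) • (noMode op (2,true) (1,true) (k₃+l) x
            + noMode op (2,true) (0,true) (k₃+l) x))
        - (-(Complex.I)/2) • (noMode op (2,true) (1,true) (k₃+l) (xOnePlus op k₂ x)
            + noMode op (2,true) (0,true) (k₃+l) (xOnePlus op k₂ x)) = _
    rw [xOnePlus_smul op hW hA, xOnePlus_add op hW hA, ← smul_sub]
    have split : (xOnePlus op k₂ (noMode op (2,true) (1,true) (k₃+l) x)
          + xOnePlus op k₂ (noMode op (2,true) (0,true) (k₃+l) x))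
        - (noMode op (2,true) (1,true) (k₃+l) (xOnePlus op k₂ x)
          + noMode op (2,true) (0,true) (k₃+l) (xOnePlus op k₂ x))
        = (xOnePlus op k₂ (noMode op (2,true) (1,true) (k₃+l) x)
            - noMode op (2,true) (1,true) (k₃+l) (xOnePlus op k₂ x))
          + (xOnePlus op k₂ (noMode op (2,true) (0,true) (k₃+l) x)
            - noMode op (2,true) (0,true) (k₃+l) (xOnePlus op k₂ x)) := by abel
    have e1 : xOnePlus op k₂ (noMode op (2,true) (1,true) (k₃+l) x)
        - noMode op (2,true) (1,true) (k₃+l) (xOnePlus op k₂ x)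
        = Complex.I • (pair6 (1,false) (2,true) • noMode op (2,true) (1,true) (k₂+(k₃+l)) x
            + pair6 (1,false) (1,true) • noMode op (2,true) (2,true) (k₂+(k₃+l)) x) :=
      master op hW hA pFF pFe pFe k₂ (k₃+l) x
    have e2 : xOnePlus op k₂ (noMode op (2,true) (0,true) (k₃+l) x)
        - noMode op (2,true) (0,true) (k₃+l) (xOnePlus op k₂ x)
        = Complex.I • (pair6 (1,false) (2,true) • noMode op (2,true) (0,true) (k₂+(k₃+l)) x
            + pair6 (1,false) (0,true) • noMode op (2,true) (2,true) (k₂+(k₃+l)) x) :=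
      master op hW hA pFF pFβ pFβ k₂ (k₃+l) x
    rw [split, e1, e2, pair_ef, pee, peβ]
    module
  -- Step 3 : final bracket vanishes
  rw [h2]
  show xOnePlus op k₁ (((-(Complex.I)/2) * (Complex.I * (-1) + Complex.I * (-1))) •
        noMode op (2,true) (2,true) (k₂+(k₃+l)) w)
      - ((-(Complex.I)/2) * (Complex.I * (-1) + Complex.I * (-1))) •
        noMode op (2,true) (2,true) (k₂+(k₃+l)) (xOnePlus op k₁ w) = 0
  rw [xOnePlus_smul op hW hA, ← smul_sub]
  have hm : xOnePlus op k₁ (noMode op (2,true) (2,true) (k₂+(k₃+l)) w)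
      - noMode op (2,true) (2,true) (k₂+(k₃+l)) (xOnePlus op k₁ w)
      = Complex.I • (pair6 (1,false) (2,true) • noMode op (2,true) (2,true) (k₁+(k₂+(k₃+l))) w
          + pair6 (1,false) (2,true) • noMode op (2,true) (2,true) (k₁+(k₂+(k₃+l))) w) :=
    master op hW hA pFF pFF pFF k₁ (k₂+(k₃+l)) w
  rw [hm, pair_ef]
  simp
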